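/- arXiv:math/0609590 — 3 statements merged into one kernel-verified Lean document; each statement's English description precedes it below -/
import Mathlib

section
/- Let c : ℝ → ℝ be continuous with ∫_{-∞}^z |c(v)| f_S(v) dv < ∞ for every z ∈ ℝ, and define m(z) = (2/(f_S(z) σ(z)²)) ∫_{-∞}^z c(v) f_S(v) dv. Then m is differentiable on ℝ and satisfies the linear differential equation m'(z) = 2 c(z)/σ(z)² − (2 S(z)/σ(z)²) m(z) for every z ∈ ℝ. -/
/-- If `c` is continuous with `∫_{-∞}^z |c| f_S < ∞` for every `z`, then
`m(z) = (2/(f_S(z) σ(z)²)) ∫_{-∞}^z c f_S` is differentiable and solves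
`m'(z) = 2c(z)/σ(z)² − (2S(z)/σ(z)²) m(z)`. -/
theorem solution_of_linear_ode
    (σ S : ℝ → ℝ) (hσ : Continuous σ) (hσpos : ∀ v, 0 < (σ v) ^ 2)
    (hS : Continuous S)
    (G : ℝ)
    (hGint : MeasureTheory.Integrable
      (fun x => ((σ x) ^ 2)⁻¹ * Real.exp (2 * ∫ v in (0:ℝ)..x, S v / (σ v) ^ 2)))
    (hG : G = ∫ x, ((σ x) ^ 2)⁻¹ * Real.exp (2 * ∫ v in (0:ℝ)..x, S v / (σ v) ^ 2))
    (hGpos : 0 < G)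
    (f : ℝ → ℝ)
    (hf : ∀ y, f y = (G * (σ y) ^ 2)⁻¹ * Real.exp (2 * ∫ v in (0:ℝ)..y, S v / (σ v) ^ 2))
    (c : ℝ → ℝ) (hc : Continuous c)
    (hcint : ∀ z : ℝ, MeasureTheory.IntegrableOn (fun v => |c v| * f v) (Set.Iic z))
    (m : ℝ → ℝ)
    (hm : ∀ z, m z = 2 / (f z * (σ z) ^ 2) * ∫ v in Set.Iic z, c v * f v) :
    ∀ z, HasDerivAt m (2 * c z / (σ z) ^ 2 - 2 * S z / (σ z) ^ 2 * m z) z := by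
  intro z
  have hσne : ∀ v, (σ v) ^ 2 ≠ 0 := fun v => (hσpos v).ne'
  set E : ℝ → ℝ := fun x => ∫ v in (0:ℝ)..x, S v / (σ v) ^ 2 with hEdef
  have hcontS : Continuous fun v => S v / (σ v) ^ 2 := hS.div (hσ.pow 2) hσne
  have hEderiv : ∀ x, HasDerivAt E (S x / (σ x) ^ 2) x := fun x =>
    (hcontS.integral_hasStrictDerivAt 0 x).hasDerivAt
  have hEcont : Continuous E := by
    have : Differentiable ℝ E := fun x => (hEderiv x).differentiableAt
    exact this.continuous
  have hfcont : Continuous f := by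
    have : f = fun y => (G * (σ y) ^ 2)⁻¹ * Real.exp (2 * E y) := funext hf
    rw [this]
    exact ((continuous_const.mul (hσ.pow 2)).inv₀
      (fun y => mul_ne_zero hGpos.ne' (hσne y))).mul
      (Real.continuous_exp.comp (continuous_const.mul hEcont))
  have hfpos : ∀ y, 0 < f y := by
    intro y
    rw [hf y]
    exact mul_pos (inv_pos.2 (mul_pos hGpos (hσpos y))) (Real.exp_pos _)
  have hcfcont : Continuous fun v => c v * f v := hc.mul hfcont
  have hcfint : ∀ x : ℝ, MeasureTheory.IntegrableOn (fun v => c v * f v) (Set.Iic x) := by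
    intro x
    refine (hcint x).mono' hcfcont.aestronglyMeasurable.restrict ?_
    filter_upwards with v
    rw [Real.norm_eq_abs, abs_mul, abs_of_pos (hfpos v)]
  set F : ℝ → ℝ := fun x => ∫ v in Set.Iic x, c v * f v with hFdef
  have hFeq : ∀ x, F x = F 0 + ∫ v in (0:ℝ)..x, c v * f v := by
    intro x
    have := intervalIntegral.integral_Iic_sub_Iic (hcfint 0) (hcfint x)
    simp only [hFdef]
    linarith [this]
  have hFderiv : HasDerivAt F (c z * f z) z := by
    have h1 : HasDerivAt (fun x => F 0 + ∫ v in (0:ℝ)..x, c v * f v) (c z * f z) z :=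
      ((hcfcont.integral_hasStrictDerivAt 0 z).hasDerivAt).const_add (F 0)
    exact h1.congr_of_eventuallyEq (Filter.Eventually.of_forall hFeq)
  have hmeq : ∀ x, m x = 2 * G * Real.exp (-(2 * E x)) * F x := by
    intro x
    have hfx : f x = (G * σ x ^ 2)⁻¹ * Real.exp (2 * E x) := hf x
    rw [hm x, hfx, Real.exp_neg]
    have h1 : Real.exp (2 * E x) ≠ 0 := Real.exp_ne_zero _
    field_simp [h1, hσne x, hGpos.ne']
    ring_nf
    have hσx : σ x ≠ 0 := fun h => hσne x (by rw [h]; ring)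
    rw [mul_comm (σ x), mul_assoc, mul_inv_cancel₀ hσx, mul_one]
  have hD : HasDerivAt (fun x => 2 * G * Real.exp (-(2 * E x)) * F x)
      ((2 * G * (Real.exp (-(2 * E z)) * (-(2 * (S z / (σ z) ^ 2))))) * F z
        + 2 * G * Real.exp (-(2 * E z)) * (c z * f z)) z := by
    have h1 : HasDerivAt (fun x => -(2 * E x)) (-(2 * (S z / (σ z) ^ 2))) z :=
      ((hEderiv z).const_mul 2).neg
    have h2 := h1.exp
    exact (h2.const_mul (2 * G)).mul hFderiv
  have hm' : HasDerivAt m ((2 * G * (Real.exp (-(2 * E z)) * (-(2 * (S z / (σ z) ^ 2))))) * F z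
        + 2 * G * Real.exp (-(2 * E z)) * (c z * f z)) z :=
    hD.congr_of_eventuallyEq (Filter.Eventually.of_forall hmeq)
  convert hm' using 1
  have hfz : f z = (G * σ z ^ 2)⁻¹ * Real.exp (2 * E z) := hf z
  rw [hmeq z, hfz, Real.exp_neg]
  have h1 : Real.exp (2 * E z) ≠ 0 := Real.exp_ne_zero _
  field_simp [h1, hσne z, hGpos.ne']
  ring
end

section
/- Fix x ∈ ℝ. Assume ∫_{-∞}^x |2h(y)S(y) + h'(y)σ(y)²| f_S(y) dy < ∞ and lim_{y→−∞} K_x(y) h(y) σ(y)² f_S(y) = 0. Define M(y) = ∫_0^y [ 2·1_{{z<x}} h(z) K_x(z) + 2 (F_S(x ∧ z) − F_S(x) F_S(z)) / (σ(z)² f_S(z)) ] dz. Then M is twice continuously differentiable on ℝ and solves the Poisson-type equation M'(y) S(y) + (1/2) M''(y) σ(y)² = c_x(y) for every y ∈ ℝ. -/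
private lemma poisson_alg0 (s2 Ey Gv : ℝ) (hs2 : s2 ≠ 0) (hG : Gv ≠ 0) :
    s2 * ((Gv * s2)⁻¹ * Ey) = Ey * Gv⁻¹ := by
  field_simp

private lemma poisson_alg1 (Gv Fx Fy SS s2 Ey : ℝ) (hs2 : s2 ≠ 0) (hEy : Ey ≠ 0)
    (hG : Gv ≠ 0) :
    2 * (Gv * Fx * (1 - Fy) * Ey⁻¹) * SS +
      (Gv * Fx * -((Gv * s2)⁻¹ * Ey) * Ey⁻¹ +
        Gv * Fx * (1 - Fy) * (-(Ey * (2 * (SS / s2))) / Ey ^ 2)) * s2 = -Fx := by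
  field_simp
  ring

private lemma poisson_alg2 (Gv Fx Fy SS s2 Ey Ky hy h'y : ℝ) (hs2 : s2 ≠ 0) (hEy : Ey ≠ 0)
    (hG : Gv ≠ 0) (hh : hy ≠ 0) :
    2 * (hy * Ky + Gv * (Fy - Fx) * Ey⁻¹) * SS +
      (h'y * Ky + hy * -(s2 * hy)⁻¹ +
        (Gv * ((Gv * s2)⁻¹ * Ey) * Ey⁻¹ +
          Gv * (Fy - Fx) * (-(Ey * (2 * (SS / s2))) / Ey ^ 2))) * s2 =
      Ky * (2 * hy * SS + h'y * s2) := by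
  field_simp
  ring


/-- `M` is twice continuously differentiable and solves the Poisson-type equation
`M' S + (1/2) M'' σ² = c_x`. -/
theorem poisson_equation_solution
    (σ S : ℝ → ℝ) (hσ : Continuous σ) (hσpos : ∀ v, 0 < (σ v) ^ 2)
    (hS : Continuous S)
    (G : ℝ)
    (hGint : MeasureTheory.Integrable
      (fun x => ((σ x) ^ 2)⁻¹ * Real.exp (2 * ∫ v in (0:ℝ)..x, S v / (σ v) ^ 2)))
    (hG : G = ∫ x, ((σ x) ^ 2)⁻¹ * Real.exp (2 * ∫ v in (0:ℝ)..x, S v / (σ v) ^ 2))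
    (hGpos : 0 < G)
    (f : ℝ → ℝ)
    (hf : ∀ y, f y = (G * (σ y) ^ 2)⁻¹ * Real.exp (2 * ∫ v in (0:ℝ)..y, S v / (σ v) ^ 2))
    (F : ℝ → ℝ)
    (hF : ∀ x, F x = ∫ y in Set.Iic x, f y)
    (h h' : ℝ → ℝ) (hpos : ∀ y, 0 < h y)
    (hderiv : ∀ y, HasDerivAt h (h' y) y) (hcont : Continuous h')
    (K : ℝ → ℝ → ℝ)
    (hK : ∀ x y, K x y = ∫ v in y..x, (((σ v) ^ 2) * h v)⁻¹)
    (c : ℝ → ℝ → ℝ)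
    (hc : ∀ x y, c x y =
      (if y < x then K x y * (2 * h y * S y + h' y * (σ y) ^ 2) else 0) - F x)
    (x : ℝ)
    (hint : MeasureTheory.IntegrableOn
      (fun y => |2 * h y * S y + h' y * (σ y) ^ 2| * f y) (Set.Iic x))
    (hlim : Filter.Tendsto (fun y => K x y * h y * (σ y) ^ 2 * f y)
      Filter.atBot (nhds 0))
    (M : ℝ → ℝ)
    (hM : ∀ y, M y = ∫ z in (0:ℝ)..y,
      (2 * (if z < x then h z * K x z else 0) +
        2 * (F (min x z) - F x * F z) / ((σ z) ^ 2 * f z))) :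
    ContDiff ℝ 2 M ∧
      ∀ y, deriv M y * S y + (1 / 2) * deriv (deriv M) y * (σ y) ^ 2 = c x y := by
  have hσ2 : ∀ z, (σ z) ^ 2 ≠ 0 := fun z => ne_of_gt (hσpos z)
  have hhne : ∀ z, h z ≠ 0 := fun z => ne_of_gt (hpos z)
  have hGne : G ≠ 0 := ne_of_gt hGpos
  have hσne : ∀ z, σ z ≠ 0 := fun z => by
    intro hz; exact absurd (hσpos z) (by rw [hz]; simp)
  have hhcont : Continuous h := continuous_iff_continuousAt.2 fun y => (hderiv y).continuousAt
  have hSdiv : Continuous fun v => S v / (σ v) ^ 2 := hS.div (hσ.pow 2) hσ2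
  set E : ℝ → ℝ := fun z => Real.exp (2 * ∫ v in (0:ℝ)..z, S v / (σ v) ^ 2) with hEdef
  have hEpos : ∀ z, 0 < E z := fun z => Real.exp_pos _
  have hEne : ∀ z, E z ≠ 0 := fun z => ne_of_gt (hEpos z)
  have hEderiv : ∀ z, HasDerivAt E (E z * (2 * (S z / (σ z) ^ 2))) z := by
    intro z
    have h1 : HasDerivAt (fun y => ∫ v in (0:ℝ)..y, S v / (σ v) ^ 2) (S z / (σ z) ^ 2) z :=
      (hSdiv.integral_hasStrictDerivAt 0 z).hasDerivAt
    simpa [hEdef] using (h1.const_mul 2).exp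
  have hEcont : Continuous E := continuous_iff_continuousAt.2 fun z => (hEderiv z).continuousAt
  have hfE : ∀ z, f z = (G * (σ z) ^ 2)⁻¹ * E z := fun z => hf z
  have hfcont : Continuous f := by
    have : f = fun y => (G * (σ y) ^ 2)⁻¹ * E y := funext hfE
    rw [this]
    exact (Continuous.inv₀ (continuous_const.mul (hσ.pow 2))
      (fun y => mul_ne_zero hGne (hσ2 y))).mul hEcont
  have hfint : MeasureTheory.Integrable f := by
    have : f = fun y => G⁻¹ * (((σ y) ^ 2)⁻¹ * E y) := by
      funext y; rw [hfE y, mul_inv]; ring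
    rw [this]
    exact hGint.const_mul _
  have hFderiv : ∀ y, HasDerivAt F (f y) y := by
    intro y
    have key : ∀ t, F t = F 0 + ∫ s in (0:ℝ)..t, f s := by
      intro t
      have := intervalIntegral.integral_Iic_sub_Iic (μ := MeasureTheory.volume)
        (f := f) (a := (0:ℝ)) (b := t) hfint.integrableOn hfint.integrableOn
      rw [hF t, hF 0]
      linarith [this]
    have h1 : HasDerivAt (fun t => F 0 + ∫ s in (0:ℝ)..t, f s) (f y) y :=
      ((hfcont.integral_hasStrictDerivAt 0 y).hasDerivAt).const_add (F 0)
    exact h1.congr_of_eventuallyEq (Filter.Eventually.of_forall key)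
  have hFcont : Continuous F := continuous_iff_continuousAt.2 fun y => (hFderiv y).continuousAt
  have hg0cont : Continuous fun v => (((σ v) ^ 2) * h v)⁻¹ :=
    Continuous.inv₀ ((hσ.pow 2).mul hhcont) (fun v => mul_ne_zero (hσ2 v) (hhne v))
  have hKderiv : ∀ z, HasDerivAt (fun z => K x z) (-(((σ z) ^ 2) * h z)⁻¹) z := by
    intro z
    have h1 : HasDerivAt (fun z => ∫ v in x..z, (((σ v) ^ 2) * h v)⁻¹)
        ((((σ z) ^ 2) * h z)⁻¹) z := (hg0cont.integral_hasStrictDerivAt x z).hasDerivAt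
    exact h1.neg.congr_of_eventuallyEq (Filter.Eventually.of_forall fun y => by
      show K x y = _
      rw [hK, intervalIntegral.integral_symm]; rfl)
  have hKcont : Continuous fun z => K x z :=
    continuous_iff_continuousAt.2 fun z => (hKderiv z).continuousAt
  have hKxx : K x x = 0 := by rw [hK]; simp
  -- the pieces
  set u : ℝ → ℝ := fun z => h z * K x z + G * (F z - F x) * (E z)⁻¹ with hudef
  set u' : ℝ → ℝ := fun z =>
    h' z * K x z + h z * -(((σ z) ^ 2) * h z)⁻¹ +
      (G * f z * (E z)⁻¹ + G * (F z - F x) * (-(E z * (2 * (S z / (σ z) ^ 2))) / (E z) ^ 2))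
    with hu'def
  have huderiv : ∀ z, HasDerivAt u (u' z) z := by
    intro z
    simp only [hudef, hu'def]
    exact ((hderiv z).mul (hKderiv z)).add
      ((((hFderiv z).sub_const (F x)).const_mul G).mul ((hEderiv z).inv (hEne z)))
  have hu'cont : Continuous u' := by
    simp only [hu'def]
    refine ((hcont.mul hKcont).add (hhcont.mul hg0cont.neg)).add
      (((continuous_const.mul hfcont).mul (hEcont.inv₀ hEne)).add
        (((continuous_const.mul (hFcont.sub continuous_const)).mul
          (((hEcont.mul (continuous_const.mul hSdiv)).neg).div (hEcont.pow 2)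
            (fun z => pow_ne_zero 2 (hEne z))))))
  have hux : u x = 0 := by simp [hudef, hKxx]
  have hu'x : u' x = 0 := by
    simp only [hu'def, hKxx, mul_zero, zero_mul, sub_self, zero_add, zero_div, add_zero]
    rw [hfE x]
    field_simp [hσne x, hhne x, hGne, hEne x]
    ring
  set v : ℝ → ℝ := fun z => if z < x then u z else 0 with hvdef
  set v' : ℝ → ℝ := fun z => if z < x then u' z else 0 with hv'def
  have hvderiv : ∀ z, HasDerivAt v (v' z) z := by
    intro z
    rcases lt_trichotomy z x with hz | hz | hz
    · have hev : v =ᶠ[nhds z] u :=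
        Filter.eventuallyEq_of_mem (Iio_mem_nhds hz) (fun w hw => by
          simp only [hvdef]; rw [if_pos (Set.mem_Iio.1 hw)])
      have : v' z = u' z := by simp only [hv'def]; rw [if_pos hz]
      rw [this]
      exact (huderiv z).congr_of_eventuallyEq hev
    · subst hz
      have hv'z : v' z = 0 := by simp only [hv'def]; rw [if_neg (lt_irrefl z)]
      rw [hv'z]
      have h0 : HasDerivAt u 0 z := hu'x ▸ huderiv z
      rw [hasDerivAt_iff_isLittleO] at h0 ⊢
      have hb : ∀ w, ‖v w - v z - (w - z) • (0:ℝ)‖ ≤ ‖u w - u z - (w - z) • (0:ℝ)‖ := by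
        intro w
        simp only [hvdef, smul_zero, sub_zero, hux, lt_irrefl, if_neg (lt_irrefl z)]
        by_cases hw : w < z
        · simp [hw]
        · simp [hw]
      exact (Asymptotics.isBigO_of_le _ hb).trans_isLittleO h0
    · have hev : v =ᶠ[nhds z] (fun _ => (0:ℝ)) :=
        Filter.eventuallyEq_of_mem (Ioi_mem_nhds hz) (fun w hw => by
          simp only [hvdef]; rw [if_neg (not_lt.2 (le_of_lt (Set.mem_Ioi.1 hw)))])
      have : v' z = 0 := by simp only [hv'def]; rw [if_neg (not_lt.2 (le_of_lt hz))]
      rw [this]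
      exact (hasDerivAt_const z 0).congr_of_eventuallyEq hev
  have hvcont : Continuous v := continuous_iff_continuousAt.2 fun z => (hvderiv z).continuousAt
  have hv'cont : Continuous v' := by
    rw [continuous_iff_continuousAt]
    intro z
    rcases lt_trichotomy z x with hz | hz | hz
    · have hev : v' =ᶠ[nhds z] u' :=
        Filter.eventuallyEq_of_mem (Iio_mem_nhds hz) (fun w hw => by
          simp only [hv'def]; rw [if_pos (Set.mem_Iio.1 hw)])
      exact (continuousAt_congr hev).2 hu'cont.continuousAt
    · subst hz
      have hv'z : v' z = 0 := by simp only [hv'def]; rw [if_neg (lt_irrefl z)]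
      have hb2 : ∀ w, ‖v' w‖ ≤ |u' w| := by
        intro w
        simp only [hv'def]
        by_cases hw : w < z
        · rw [if_pos hw]; exact le_refl _
        · rw [if_neg hw]; simp
      have ht2 : Filter.Tendsto (fun w => |u' w|) (nhds z) (nhds 0) := by
        have := (hu'cont.abs.tendsto z)
        rw [hu'x] at this
        simpa using this
      have hT : Filter.Tendsto v' (nhds z) (nhds 0) := squeeze_zero_norm hb2 ht2
      have : ContinuousAt v' z ↔ Filter.Tendsto v' (nhds z) (nhds 0) := by
        rw [ContinuousAt, hv'z]
      exact this.2 hT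
    · have hev : v' =ᶠ[nhds z] (fun _ => (0:ℝ)) :=
        Filter.eventuallyEq_of_mem (Ioi_mem_nhds hz) (fun w hw => by
          simp only [hv'def]; rw [if_neg (not_lt.2 (le_of_lt (Set.mem_Ioi.1 hw)))])
      exact (continuousAt_congr hev).2 continuousAt_const
  set w : ℝ → ℝ := fun z => G * F x * (1 - F z) * (E z)⁻¹ with hwdef
  set w' : ℝ → ℝ := fun z =>
    G * F x * -f z * (E z)⁻¹ +
      G * F x * (1 - F z) * (-(E z * (2 * (S z / (σ z) ^ 2))) / (E z) ^ 2) with hw'def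
  have hwderiv : ∀ z, HasDerivAt w (w' z) z := by
    intro z
    simp only [hwdef, hw'def]
    exact (((hFderiv z).const_sub 1).const_mul (G * F x)).mul ((hEderiv z).inv (hEne z))
  have hwcont : Continuous w := continuous_iff_continuousAt.2 fun z => (hwderiv z).continuousAt
  have hw'cont : Continuous w' := by
    simp only [hw'def]
    exact ((continuous_const.mul hfcont.neg).mul (hEcont.inv₀ hEne)).add
      ((continuous_const.mul (continuous_const.sub hFcont)).mul
        (((hEcont.mul (continuous_const.mul hSdiv)).neg).div (hEcont.pow 2)
          (fun z => pow_ne_zero 2 (hEne z))))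
  set g : ℝ → ℝ := fun z => 2 * w z + 2 * v z with hgdef
  set g' : ℝ → ℝ := fun z => 2 * w' z + 2 * v' z with hg'def
  have hgderiv : ∀ z, HasDerivAt g (g' z) z := by
    intro z
    simp only [hgdef, hg'def]
    exact ((hwderiv z).const_mul 2).add ((hvderiv z).const_mul 2)
  have hgcont : Continuous g := by
    simp only [hgdef]
    exact (continuous_const.mul hwcont).add (continuous_const.mul hvcont)
  have hg'cont : Continuous g' := by
    simp only [hg'def]
    exact (continuous_const.mul hw'cont).add (continuous_const.mul hv'cont)
  have hMg : ∀ y, M y = ∫ z in (0:ℝ)..y, g z := by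
    intro y
    rw [hM y]
    apply intervalIntegral.integral_congr
    intro z _
    have hσ2f : (σ z) ^ 2 * f z = E z * G⁻¹ := by
      rw [hfE z]
      exact poisson_alg0 _ _ _ (hσ2 z) hGne
    simp only [hgdef, hwdef, hvdef, hudef]
    rw [hσ2f]
    by_cases hz : z < x
    · rw [if_pos hz, if_pos hz, min_eq_right hz.le]
      field_simp [hGne, hEne z]
      ring
    · rw [if_neg hz, if_neg hz, min_eq_left (not_lt.1 hz)]
      field_simp [hGne, hEne z]
      ring
  have hMderiv : ∀ y, HasDerivAt M (g y) y := fun y =>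
    ((hgcont.integral_hasStrictDerivAt 0 y).hasDerivAt).congr_of_eventuallyEq
      (Filter.Eventually.of_forall hMg)
  have hMd : deriv M = g := funext fun y => (hMderiv y).deriv
  have hgd : deriv g = g' := funext fun z => (hgderiv z).deriv
  constructor
  · rw [show (2 : WithTop ℕ∞) = 1 + 1 by norm_num, contDiff_succ_iff_deriv]
    refine ⟨fun y => (hMderiv y).differentiableAt, ?_, ?_⟩
    · intro hcontra; exact absurd hcontra (by norm_num)
    · rw [hMd, contDiff_one_iff_deriv]
      exact ⟨fun z => (hgderiv z).differentiableAt, by rw [hgd]; exact hg'cont⟩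
  · intro y
    have hl1 : 2 * w y * S y + w' y * (σ y) ^ 2 = -F x := by
      simp only [hwdef, hw'def]
      rw [hfE y]
      exact poisson_alg1 G (F x) (F y) (S y) ((σ y) ^ 2) (E y) (hσ2 y) (hEne y) hGne
    have hl2 : y < x → 2 * u y * S y + u' y * (σ y) ^ 2 =
        K x y * (2 * h y * S y + h' y * (σ y) ^ 2) := by
      intro _
      simp only [hudef, hu'def]
      rw [hfE y]
      exact poisson_alg2 G (F x) (F y) (S y) ((σ y) ^ 2) (E y) (K x y) (h y) (h' y)
        (hσ2 y) (hEne y) hGne (hhne y)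
    rw [hMd, hgd, hc]
    simp only [hgdef, hg'def, hvdef, hv'def]
    by_cases hy : y < x
    · rw [if_pos hy, if_pos hy, if_pos hy]
      linear_combination hl1 + hl2 hy
    · rw [if_neg hy, if_neg hy, if_neg hy]
      linear_combination hl1
end

section
/- Let g : ℝ → ℝ be twice continuously differentiable with ∫_ℝ |g'(y)S(y) + (1/2) g''(y) σ(y)²| f_S(y) dy < ∞ and lim_{y→−∞} g'(y) σ(y)² f_S(y) = 0 = lim_{y→+∞} g'(y) σ(y)² f_S(y). Then ∫_ℝ ( g'(y) S(y) + (1/2) g''(y) σ(y)² ) f_S(y) dy = 0, i.e. the generator of the diffusion applied to g has zero mean under the invariant density. -/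
open MeasureTheory Filter Real

/-- The generator of the diffusion applied to a suitable `C²` function `g` has zero
mean under the invariant density `f_S`. -/
theorem generator_zero_mean
    (σ S : ℝ → ℝ) (hσ : Continuous σ) (hσpos : ∀ v, 0 < (σ v) ^ 2)
    (hS : Continuous S)
    (G : ℝ)
    (hGint : MeasureTheory.Integrable
      (fun x => ((σ x) ^ 2)⁻¹ * Real.exp (2 * ∫ v in (0:ℝ)..x, S v / (σ v) ^ 2)))
    (hG : G = ∫ x, ((σ x) ^ 2)⁻¹ * Real.exp (2 * ∫ v in (0:ℝ)..x, S v / (σ v) ^ 2))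
    (hGpos : 0 < G)
    (f : ℝ → ℝ)
    (hf : ∀ y, f y = (G * (σ y) ^ 2)⁻¹ * Real.exp (2 * ∫ v in (0:ℝ)..y, S v / (σ v) ^ 2))
    (g : ℝ → ℝ) (hg : ContDiff ℝ 2 g)
    (hint : MeasureTheory.Integrable
      (fun y => |deriv g y * S y + (1 / 2) * deriv (deriv g) y * (σ y) ^ 2| * f y))
    (hbot : Filter.Tendsto (fun y => deriv g y * (σ y) ^ 2 * f y)
      Filter.atBot (nhds 0))
    (htop : Filter.Tendsto (fun y => deriv g y * (σ y) ^ 2 * f y)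
      Filter.atTop (nhds 0)) :
    ∫ y, (deriv g y * S y + (1 / 2) * deriv (deriv g) y * (σ y) ^ 2) * f y = 0 := by
  set E : ℝ → ℝ := fun y => 2 * ∫ v in (0:ℝ)..y, S v / (σ v) ^ 2 with hE
  have hσne : ∀ v, (σ v) ^ 2 ≠ 0 := fun v => (hσpos v).ne'
  have hσ2 : Continuous fun v => (σ v) ^ 2 := (hσ.pow 2)
  have hcont : Continuous fun v => S v / (σ v) ^ 2 := hS.div hσ2 hσne
  have hEderiv : ∀ y, HasDerivAt E (2 * (S y / (σ y) ^ 2)) y := by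
    intro y
    have h := intervalIntegral.integral_hasDerivAt_right
      (hcont.intervalIntegrable 0 y) (hcont.stronglyMeasurableAtFilter _ _) hcont.continuousAt
    simpa [hE] using h.const_mul 2
  have hgC1 : ContDiff ℝ 1 (deriv g) := by
    have h2 : ContDiff ℝ (1 + 1) g := by
      convert hg using 2 <;> norm_num
    exact (contDiff_succ_iff_deriv.mp h2).2.2
  have hdgc : Continuous (deriv g) := hgC1.continuous
  have hddgc : Continuous (deriv (deriv g)) := by
    have h1 : ContDiff ℝ (0 + 1) (deriv g) := by
      convert hgC1 using 2 <;> norm_num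
    exact (contDiff_succ_iff_deriv.mp h1).2.2.continuous
  have hg2 : ∀ y, HasDerivAt (deriv g) (deriv (deriv g) y) y := fun y =>
    ((contDiff_succ_iff_deriv.mp (show ContDiff ℝ (0+1) (deriv g) by
      convert hgC1 using 2 <;> norm_num)).1 y).hasDerivAt
  have hF : ∀ y, deriv g y * (σ y) ^ 2 * f y = deriv g y * (G⁻¹ * Real.exp (E y)) := by
    intro y
    rw [hf y, mul_inv]
    simp only [hE]
    field_simp [hσne y, hGpos.ne']
    rw [mul_div_assoc, div_self (fun h => hσne y (by rw [h]; ring)), mul_one]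
  have hfpos : ∀ y, 0 < f y := by
    intro y
    rw [hf y]
    have h1 := hGpos
    have h2 := hσpos y
    positivity
  -- key derivative computation
  have hderiv : ∀ y, HasDerivAt (fun y => deriv g y * (σ y) ^ 2 * f y)
      (2 * ((deriv g y * S y + (1 / 2) * deriv (deriv g) y * (σ y) ^ 2) * f y)) y := by
    intro y
    have h1 : HasDerivAt (fun y => deriv g y * (G⁻¹ * Real.exp (E y)))
        (deriv (deriv g) y * (G⁻¹ * Real.exp (E y))
          + deriv g y * (G⁻¹ * (Real.exp (E y) * (2 * (S y / (σ y) ^ 2))))) y :=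
      (hg2 y).mul ((((hEderiv y).exp).const_mul G⁻¹))
    have h2 : HasDerivAt (fun y => deriv g y * (σ y) ^ 2 * f y)
        (deriv (deriv g) y * (G⁻¹ * Real.exp (E y))
          + deriv g y * (G⁻¹ * (Real.exp (E y) * (2 * (S y / (σ y) ^ 2))))) y := by
      apply h1.congr_of_eventuallyEq
      filter_upwards with z using (hF z)
    convert h2 using 1
    rw [hf y]
    simp only [hE]
    field_simp [hσne y, hGpos.ne']
    rw [add_div, mul_div_assoc (deriv (deriv g) y), div_self (hσne y), mul_one, add_comm]
  -- integrability of the derivative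
  have hfc : Continuous f := by
    have h : Continuous fun y => (G * (σ y) ^ 2)⁻¹ * Real.exp (E y) := by
      apply Continuous.mul
      · exact ((continuous_const.mul hσ2).inv₀ (fun y => by
          have := hGpos; have := hσpos y; exact mul_ne_zero hGpos.ne' (hσne y)))
      · exact ((continuous_const.mul (intervalIntegral.continuous_primitive
          (fun a b => hcont.intervalIntegrable a b) 0)).rexp)
    exact h.congr fun y => (hf y).symm
  have hmeas : Continuous fun y =>
      (deriv g y * S y + (1 / 2) * deriv (deriv g) y * (σ y) ^ 2) * f y := by
    exact (((hdgc.mul hS).add ((continuous_const.mul hddgc).mul hσ2)).mul hfc)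
  have hint2 : MeasureTheory.Integrable
      (fun y => (deriv g y * S y + (1 / 2) * deriv (deriv g) y * (σ y) ^ 2) * f y) := by
    apply hint.mono' hmeas.aestronglyMeasurable
    filter_upwards with y
    rw [Real.norm_eq_abs, abs_mul, abs_of_pos (hfpos y)]
  have hint3 : MeasureTheory.Integrable
      (fun y => 2 * ((deriv g y * S y + (1 / 2) * deriv (deriv g) y * (σ y) ^ 2) * f y)) :=
    hint2.const_mul 2
  have key := MeasureTheory.integral_of_hasDerivAt_of_tendsto hderiv hint3 hbot htop
  rw [sub_zero, MeasureTheory.integral_const_mul] at key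
  linarith [key]
end
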